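/- Let a, b ∈ ℤ and n ∈ ℕ with gcd(b, n) = 1. Then ∑_{1 ≤ k ≤ n, gcd(k,n)=1} gcd(bk − a, n) = φ(n) · τ(n, a), where τ(n, a) denotes the number of divisors d of n with gcd(d, a) = 1. In particular, for a = b = 1 this gives Menon's identity ∑_{1 ≤ k ≤ n, gcd(k,n)=1} gcd(k − 1, n) = φ(n) τ(n), where τ(n) is the number of divisors of n. -/

import Mathlib

open Finset

private lemma isUnit_intCast_iff (d : ℕ) (a : ℤ) :
    IsUnit ((a : ℤ) : ZMod d) ↔ Int.gcd a (d : ℤ) = 1 := by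
  have hcast : ((a : ℤ) : ZMod d) = ((a.natAbs : ℕ) : ZMod d) ∨
      ((a : ℤ) : ZMod d) = -((a.natAbs : ℕ) : ZMod d) := by
    rcases Int.natAbs_eq a with h | h
    · left
      conv_lhs => rw [h]
      rw [Int.cast_natCast]
    · right
      conv_lhs => rw [h]
      rw [Int.cast_neg, Int.cast_natCast]
  have hiff : IsUnit ((a : ℤ) : ZMod d) ↔ IsUnit ((a.natAbs : ℕ) : ZMod d) := by
    rcases hcast with h | h <;> rw [h]
    exact IsUnit.neg_iff _
  rw [hiff, ZMod.isUnit_iff_coprime]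
  simp [Nat.Coprime, Int.gcd]

private lemma gcd_expand (n : ℕ) (hn : 0 < n) (x : ℤ) :
    (Int.gcd x (n : ℤ) : ℕ) =
      ∑ d ∈ n.divisors, if (d : ℤ) ∣ x then Nat.totient d else 0 := by
  have hg : Int.gcd x (n : ℤ) = Nat.gcd x.natAbs n := by simp [Int.gcd]
  have hdiv : (Nat.gcd x.natAbs n).divisors =
      n.divisors.filter (fun d : ℕ => (d : ℤ) ∣ x) := by
    ext d
    simp only [Nat.mem_divisors, Finset.mem_filter, Int.natCast_dvd]
    constructor
    · rintro ⟨hd, hne⟩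
      exact ⟨⟨hd.trans (Nat.gcd_dvd_right _ _), hn.ne'⟩, hd.trans (Nat.gcd_dvd_left _ _)⟩
    · rintro ⟨⟨hdn, -⟩, hdx⟩
      exact ⟨Nat.dvd_gcd hdx hdn, fun h => hn.ne' (Nat.eq_zero_of_gcd_eq_zero_right h)⟩
  rw [hg, ← Nat.sum_totient (Nat.gcd x.natAbs n), hdiv, Finset.sum_filter]

private lemma fiber_count (a b : ℤ) (n d : ℕ) [NeZero n] (hd : d ∣ n)
    (hb : Int.gcd b (n : ℤ) = 1) :
    ((Finset.univ.filter
        (fun u : (ZMod n)ˣ => (d : ℤ) ∣ b * (((u : ZMod n).val : ℤ)) - a)).card)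
      * d.totient = if Int.gcd a (d : ℤ) = 1 then n.totient else 0 := by
  have hn : 0 < n := Nat.pos_of_ne_zero (NeZero.ne n)
  haveI : NeZero d := ⟨fun h => hn.ne' (Nat.eq_zero_of_zero_dvd (h ▸ hd))⟩
  have hbd : Int.gcd b (d : ℤ) = 1 := by
    have h1 : Nat.Coprime b.natAbs n := by simpa [Int.gcd] using hb
    have h2 : Nat.Coprime b.natAbs d := Nat.Coprime.coprime_dvd_right hd h1
    simpa [Int.gcd] using h2
  have hbu : IsUnit ((b : ℤ) : ZMod d) := (isUnit_intCast_iff d b).2 hbd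
  set π : (ZMod n)ˣ →* (ZMod d)ˣ := ZMod.unitsMap hd with hπ
  have hπcoe : ∀ u : (ZMod n)ˣ,
      ((π u : (ZMod d)ˣ) : ZMod d) = (((u : ZMod n).val : ℕ) : ZMod d) := by
    intro u
    simp [hπ, ZMod.unitsMap_def, ZMod.natCast_val, ZMod.castHom_apply]
  have key : ∀ u : (ZMod n)ˣ,
      ((d : ℤ) ∣ b * (((u : ZMod n).val : ℤ)) - a) ↔
        ((b : ℤ) : ZMod d) * ((π u : (ZMod d)ˣ) : ZMod d) = ((a : ℤ) : ZMod d) := by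
    intro u
    rw [← ZMod.intCast_zmod_eq_zero_iff_dvd]
    push_cast
    rw [sub_eq_zero, ← hπcoe u]
  by_cases h : Int.gcd a (d : ℤ) = 1
  · rw [if_pos h]
    have hau : IsUnit ((a : ℤ) : ZMod d) := (isUnit_intCast_iff d a).2 h
    set c : (ZMod d)ˣ := hbu.unit⁻¹ * hau.unit with hc
    have key2 : ∀ u : (ZMod n)ˣ,
        ((d : ℤ) ∣ b * (((u : ZMod n).val : ℤ)) - a) ↔ π u = c := by
      intro u
      rw [key u, hc, eq_inv_mul_iff_mul_eq, ← Units.val_inj, Units.val_mul,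
        IsUnit.unit_spec, IsUnit.unit_spec]
    simp only [key2]
    have hsurj : Function.Surjective π := ZMod.unitsMap_surjective hd
    have hcard : Fintype.card (ZMod n)ˣ =
        ∑ c' : (ZMod d)ˣ, (Finset.univ.filter (fun u : (ZMod n)ˣ => π u = c')).card := by
      rw [← Finset.card_univ]
      exact Finset.card_eq_sum_card_fiberwise (fun u _ => Finset.mem_univ (π u))
    have hfib : ∀ c' : (ZMod d)ˣ,
        (Finset.univ.filter (fun u : (ZMod n)ˣ => π u = c')).card =
        (Finset.univ.filter (fun u : (ZMod n)ˣ => π u = c)).card := by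
      intro c'
      exact MonoidHom.card_fiber_eq_of_mem_range π (hsurj c') (hsurj c)
    rw [ZMod.card_units_eq_totient n] at hcard
    rw [Finset.sum_congr rfl (fun c' _ => hfib c'), Finset.sum_const, Finset.card_univ,
      ZMod.card_units_eq_totient d, smul_eq_mul] at hcard
    rw [hcard, mul_comm]
  · rw [if_neg h]
    have hempty : (Finset.univ.filter
        (fun u : (ZMod n)ˣ => (d : ℤ) ∣ b * (((u : ZMod n).val : ℤ)) - a)).card = 0 := by
      rw [Finset.card_eq_zero, Finset.filter_eq_empty_iff]
      intro u _ hu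
      apply h
      rw [key u] at hu
      exact (isUnit_intCast_iff d a).1 (hu ▸ hbu.mul (π u).isUnit)
    rw [hempty, zero_mul]

theorem stmt19 (a b : ℤ) (n : ℕ) (hn : 0 < n) (hb : Int.gcd b n = 1) :
    (∑ k ∈ (Finset.Icc 1 n).filter (fun k => Nat.gcd k n = 1),
        Int.gcd (b * (k : ℤ) - a) n =
      Nat.totient n * ((n.divisors.filter (fun d : ℕ => Int.gcd a (d : ℤ) = 1)).card)) ∧
    (a = 1 → b = 1 →
      ∑ k ∈ (Finset.Icc 1 n).filter (fun k => Nat.gcd k n = 1),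
          Int.gcd ((k : ℤ) - 1) n =
        Nat.totient n * n.divisors.card) := by
  haveI : NeZero n := ⟨hn.ne'⟩
  have main : ∑ k ∈ (Finset.Icc 1 n).filter (fun k => Nat.gcd k n = 1),
      Int.gcd (b * (k : ℤ) - a) n =
      Nat.totient n * ((n.divisors.filter (fun d : ℕ => Int.gcd a (d : ℤ) = 1)).card) := by
    rcases eq_or_lt_of_le (show 1 ≤ n from hn) with h1 | h2
    · -- n = 1
      have hn1 : n = 1 := h1.symm
      subst hn1
      have hga : Int.gcd a ((1 : ℕ) : ℤ) = 1 := by simp [Int.gcd]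
      simp [Nat.divisors_one, Finset.filter_singleton, hga, Int.gcd]
    · -- n ≥ 2
      have hset : (Finset.Icc 1 n).filter (fun k => Nat.gcd k n = 1) =
          (Finset.range n).filter (fun k => Nat.gcd k n = 1) := by
        ext k
        simp only [Finset.mem_filter, Finset.mem_Icc, Finset.mem_range]
        constructor
        · rintro ⟨⟨hk1, hk2⟩, hg⟩
          refine ⟨lt_of_le_of_ne hk2 ?_, hg⟩
          rintro rfl
          rw [Nat.gcd_self] at hg
          omega
        · rintro ⟨hk1, hg⟩
          refine ⟨⟨?_, hk1.le⟩, hg⟩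
          rcases Nat.eq_zero_or_pos k with rfl | hpos
          · rw [Nat.gcd_zero_left] at hg; omega
          · exact hpos
      have hsum : ∑ u : (ZMod n)ˣ, (Int.gcd (b * (((u : ZMod n).val : ℤ)) - a) n : ℕ) =
          ∑ k ∈ (Finset.range n).filter (fun k => Nat.gcd k n = 1),
            Int.gcd (b * (k : ℤ) - a) n := by
        apply Finset.sum_bij (fun (u : (ZMod n)ˣ) _ => (u : ZMod n).val)
        · intro u _
          simp only [Finset.mem_filter, Finset.mem_range]
          exact ⟨ZMod.val_lt _, ZMod.val_coe_unit_coprime u⟩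
        · intro u _ u' _ h
          exact Units.ext (ZMod.val_injective n h)
        · intro k hk
          simp only [Finset.mem_filter, Finset.mem_range] at hk
          refine ⟨ZMod.unitOfCoprime k hk.2, Finset.mem_univ _, ?_⟩
          rw [ZMod.coe_unitOfCoprime, ZMod.val_cast_of_lt hk.1]
        · intro u _
          rfl
      rw [hset, ← hsum]
      calc ∑ u : (ZMod n)ˣ, (Int.gcd (b * (((u : ZMod n).val : ℤ)) - a) n : ℕ)
          = ∑ u : (ZMod n)ˣ, ∑ d ∈ n.divisors,
              if (d : ℤ) ∣ b * (((u : ZMod n).val : ℤ)) - a then Nat.totient d else 0 :=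
            Finset.sum_congr rfl (fun u _ => gcd_expand n hn _)
        _ = ∑ d ∈ n.divisors, ∑ u : (ZMod n)ˣ,
              if (d : ℤ) ∣ b * (((u : ZMod n).val : ℤ)) - a then Nat.totient d else 0 :=
            Finset.sum_comm
        _ = ∑ d ∈ n.divisors,
              ((Finset.univ.filter
                (fun u : (ZMod n)ˣ => (d : ℤ) ∣ b * (((u : ZMod n).val : ℤ)) - a)).card)
                * Nat.totient d := by
            refine Finset.sum_congr rfl (fun d _ => ?_)
            rw [Finset.sum_ite, Finset.sum_const, Finset.sum_const_zero, add_zero, smul_eq_mul]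
        _ = ∑ d ∈ n.divisors, if Int.gcd a (d : ℤ) = 1 then Nat.totient n else 0 := by
            refine Finset.sum_congr rfl (fun d hd => ?_)
            exact fiber_count a b n d (Nat.mem_divisors.1 hd).1 hb
        _ = Nat.totient n * ((n.divisors.filter (fun d : ℕ => Int.gcd a (d : ℤ) = 1)).card) := by
            rw [← Finset.sum_filter, Finset.sum_const, smul_eq_mul, mul_comm]
  refine ⟨main, ?_⟩
  rintro rfl rfl
  have h1 : (n.divisors.filter (fun d : ℕ => Int.gcd 1 (d : ℤ) = 1)) = n.divisors := by
    apply Finset.filter_true_of_mem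
    intro d _
    simp [Int.gcd]
  rw [h1] at main
  simpa using main
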